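/- Let n, n'', e be natural numbers, let N = 2^{n''} and E = 2^{e} with E ≤ N/2, let U' and V' be finite sets of n-bit strings each of cardinality N, let U₁, …, U_E be pairwise disjoint subsets of U' each of cardinality N/(2E), and let Z be a function assigning a natural number Z(u,v) to each pair of n-bit strings, such that for every n-bit string u the number of strings v ∈ V' with Z(u,v) < e is less than E. Then there exist subsets V₁, …, V_E of V', each of cardinality N/(2E), such that Z(u,v) ≥ e for all j ≤ E and all (u,v) ∈ U_j × V_j. -/

import Mathlib

/-- the paper's Lemma 7: with `N = 2^{n''}`, `E = 2^e`, `E ≤ N/2`,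
sets `U'`, `V'` of `n`-bit strings of size `N`, pairwise disjoint subsets
`U₁, …, U_E ⊆ U'` of size `N/(2E)`, and `Z` such that for every `u` fewer than `E`
strings `v ∈ V'` satisfy `Z u v < e`, there are subsets `V₁, …, V_E ⊆ V'` of size
`N/(2E)` with `Z u v ≥ e` for all `j` and `(u, v) ∈ U_j × V_j`. -/
theorem stmt_5 (n n'' e : ℕ) (N E : ℕ) (hN : N = 2 ^ n'') (hE : E = 2 ^ e)
    (hEN : E ≤ N / 2)
    (U' V' : Finset (Fin n → Bool)) (hU' : U'.card = N) (hV' : V'.card = N)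
    (U : Fin E → Finset (Fin n → Bool))
    (hUsub : ∀ j, U j ⊆ U')
    (hUdisj : ∀ j j' : Fin E, j ≠ j' → Disjoint (U j) (U j'))
    (hUcard : ∀ j, (U j).card = N / (2 * E))
    (Z : (Fin n → Bool) → (Fin n → Bool) → ℕ)
    (hZ : ∀ u : Fin n → Bool, (V'.filter (fun v => Z u v < e)).card < E) :
    ∃ V : Fin E → Finset (Fin n → Bool),
      (∀ j, V j ⊆ V') ∧ (∀ j, (V j).card = N / (2 * E)) ∧
      ∀ j : Fin E, ∀ u ∈ U j, ∀ v ∈ V j, e ≤ Z u v := by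
  -- arithmetic preliminaries
  have hEpos : 0 < E := hE ▸ Nat.two_pow_pos e
  have hen : e + 1 ≤ n'' := by
    by_contra h
    push_neg at h
    have hn'' : n'' ≤ e := Nat.lt_succ_iff.mp h
    have h1 : N ≤ E := by
      rw [hN, hE]; exact Nat.pow_le_pow_right (by norm_num) hn''
    have : N / 2 < N := Nat.div_lt_self (lt_of_lt_of_le (lt_of_lt_of_le hEpos hEN)
      (Nat.div_le_self _ _)) (by norm_num)
    omega
  have hdiv : N / (2 * E) = 2 ^ (n'' - (e + 1)) := by
    rw [hN, hE]
    have : 2 * 2 ^ e = 2 ^ (e + 1) := by ring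
    rw [this, Nat.pow_div hen (by norm_num)]
  have hkey : N / (2 * E) * E = N / 2 := by
    rw [hdiv, hE, ← pow_add]
    have : n'' - (e + 1) + e = n'' - 1 := by omega
    rw [this, hN]
    have : (2:ℕ) ^ n'' = 2 ^ (n'' - 1) * 2 := by
      rw [← pow_succ]; congr 1; omega
    omega
  have hhalf : N / 2 ≤ N := Nat.div_le_self _ _
  -- for each j, the set of good v's is large
  have main : ∀ j : Fin E, ∃ W : Finset (Fin n → Bool), W ⊆ V' ∧
      W.card = N / (2 * E) ∧ ∀ u ∈ U j, ∀ v ∈ W, e ≤ Z u v := by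
    intro j
    classical
    set good := V'.filter (fun v => ∀ u ∈ U j, e ≤ Z u v) with hgood
    have hbadsub : V'.filter (fun v => ¬ ∀ u ∈ U j, e ≤ Z u v) ⊆
        (U j).biUnion (fun u => V'.filter (fun v => Z u v < e)) := by
      intro v hv
      simp only [Finset.mem_filter] at hv
      obtain ⟨hvV, hv⟩ := hv
      push_neg at hv
      obtain ⟨u, hu, hlt⟩ := hv
      exact Finset.mem_biUnion.mpr ⟨u, hu, Finset.mem_filter.mpr ⟨hvV, hlt⟩⟩
    have hbadcard : (V'.filter (fun v => ¬ ∀ u ∈ U j, e ≤ Z u v)).card ≤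
        N / (2 * E) * (E - 1) := by
      calc (V'.filter (fun v => ¬ ∀ u ∈ U j, e ≤ Z u v)).card
          ≤ ((U j).biUnion (fun u => V'.filter (fun v => Z u v < e))).card :=
            Finset.card_le_card hbadsub
        _ ≤ ∑ u ∈ U j, (V'.filter (fun v => Z u v < e)).card :=
            Finset.card_biUnion_le
        _ ≤ ∑ _u ∈ U j, (E - 1) := by
            apply Finset.sum_le_sum
            intro u _
            have := hZ u
            omega
        _ = N / (2 * E) * (E - 1) := by
            rw [Finset.sum_const, hUcard j, smul_eq_mul]
    have hsplit : good.card + (V'.filter (fun v => ¬ ∀ u ∈ U j, e ≤ Z u v)).card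
        = N := by
      rw [hgood, Finset.card_filter_add_card_filter_not, hV']
    have hmul : N / (2 * E) * (E - 1) + N / (2 * E) = N / 2 := by
      have heq : E - 1 + 1 = E := Nat.sub_add_cancel hEpos
      have : N / (2 * E) * (E - 1) + N / (2 * E) = N / (2 * E) * E := by
        calc N / (2 * E) * (E - 1) + N / (2 * E)
            = N / (2 * E) * (E - 1 + 1) := by ring
          _ = N / (2 * E) * E := by rw [heq]
      rw [this, hkey]
    have hgoodcard : N / (2 * E) ≤ good.card := by omega
    obtain ⟨W, hWsub, hWcard⟩ := Finset.exists_subset_card_eq hgoodcard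
    refine ⟨W, fun v hv => (Finset.mem_filter.mp (hWsub hv)).1, hWcard, ?_⟩
    intro u hu v hv
    exact (Finset.mem_filter.mp (hWsub hv)).2 u hu
  choose V h1 h2 h3 using main
  exact ⟨V, h1, h2, fun j u hu v hv => h3 j u hu v hv⟩
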